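/- Let F be a field of characteristic zero. For every n ≥ 1, the F-span of the set of all functions from D to UT₂ of the form y ↦ b₀·y·b₁·y·b₂·⋯·y·bₙ (the variable y occurring exactly n times), where b₀, b₁, …, bₙ range over UT₂, has dimension exactly n + 3. (This is the multiplicity of the irreducible character indexed by λ = (n), μ = ∅ in the generalized graded cocharacter of UT₂ under the action of UT₂ itself.) -/

import Mathlib

noncomputable section

/-- The algebra of `2 × 2` matrices over `F` (ambient algebra for `UT₂`). -/
abbrev M2 (F : Type*) [Field F] := Matrix (Fin 2) (Fin 2) F

/-- The matrix unit `e₁₁`. -/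
def e11 (F : Type*) [Field F] : M2 F := Matrix.single 0 0 1

/-- The matrix unit `e₁₂`. -/
def e12 (F : Type*) [Field F] : M2 F := Matrix.single 0 1 1

/-- The matrix unit `e₂₂`. -/
def e22 (F : Type*) [Field F] : M2 F := Matrix.single 1 1 1

/-- `D = F e₁₁ ⊕ F e₂₂`, the even component of the canonical `ℤ₂`-grading of `UT₂`. -/
def Dsub (F : Type*) [Field F] : Submodule F (M2 F) := Submodule.span F {e11 F, e22 F}

/-- `F e₁₂`, the odd component of the canonical `ℤ₂`-grading of `UT₂`. -/
def oddSub (F : Type*) [Field F] : Submodule F (M2 F) := Submodule.span F {e12 F}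

/-- `UT₂`, the set of `2 × 2` upper triangular matrices. -/
def UTset (F : Type*) [Field F] : Set (M2 F) := {M | M 1 0 = 0}

namespace S16

variable {F : Type*} [Field F]

lemma ymem (y : ↥(Dsub F)) : (y : M2 F) 1 0 = 0 ∧ (y : M2 F) 0 1 = 0 := by
  obtain ⟨a, b, h⟩ := Submodule.mem_span_pair.mp y.2
  constructor <;> (rw [← h]; simp [e11, e22, Matrix.single])

lemma L1 (y : ↥(Dsub F)) (c : M2 F) (hc : c 1 0 = 0) :
    e11 F * ((y : M2 F) * c)
      = ((y : M2 F) 0 0 * c 0 0) • e11 F + ((y : M2 F) 0 0 * c 0 1) • e12 F := by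
  obtain ⟨h10, h01⟩ := ymem y
  ext i j
  fin_cases i <;> fin_cases j <;>
    simp [e11, e12, Matrix.mul_apply, Fin.sum_univ_two, Matrix.single, h10, h01, hc]

lemma L2 (y : ↥(Dsub F)) (c : M2 F) (hc : c 1 0 = 0) :
    e22 F * ((y : M2 F) * c) = ((y : M2 F) 1 1 * c 1 1) • e22 F := by
  obtain ⟨h10, h01⟩ := ymem y
  ext i j
  fin_cases i <;> fin_cases j <;>
    simp [e22, Matrix.mul_apply, Fin.sum_univ_two, Matrix.single, h10, h01, hc]

lemma L3 (y : ↥(Dsub F)) (c : M2 F) (hc : c 1 0 = 0) :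
    e12 F * ((y : M2 F) * c) = ((y : M2 F) 1 1 * c 1 1) • e12 F := by
  obtain ⟨h10, h01⟩ := ymem y
  ext i j
  fin_cases i <;> fin_cases j <;>
    simp [e12, Matrix.mul_apply, Fin.sum_univ_two, Matrix.single, h10, h01, hc]

/-- The basis functions. -/
def gfun (F : Type*) [Field F] (m : ℕ) : Fin (m + 1) ⊕ Fin 2 → (↥(Dsub F) → M2 F) :=
  Sum.elim
    (fun k y => (((y : M2 F) 0 0) ^ (k : ℕ) * ((y : M2 F) 1 1) ^ (m - (k : ℕ))) • e12 F)
    ![fun y => ((y : M2 F) 0 0) ^ m • e11 F, fun y => ((y : M2 F) 1 1) ^ m • e22 F]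

/-- The generator set. -/
def SetS (F : Type*) [Field F] (m : ℕ) : Set (↥(Dsub F) → M2 F) :=
  {f | ∃ b : Fin (m + 1) → M2 F,
    (∀ i, b i ∈ UTset F) ∧
    f = fun y : ↥(Dsub F) =>
      b 0 * (List.ofFn fun i : Fin m => ((y : M2 F)) * b i.succ).prod}

/-- Right multiplication by `y * c`, as a linear map. -/
def R (F : Type*) [Field F] (c : M2 F) : (↥(Dsub F) → M2 F) →ₗ[F] (↥(Dsub F) → M2 F) where
  toFun f := fun y => f y * ((y : M2 F) * c)
  map_add' f g := by funext y; simp [add_mul]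
  map_smul' a f := by funext y; simp [smul_mul_assoc]

lemma R_apply (c : M2 F) (f : ↥(Dsub F) → M2 F) (y : ↥(Dsub F)) :
    R F c f y = f y * ((y : M2 F) * c) := rfl

lemma R_gfun_inl (c : M2 F) (hc : c 1 0 = 0) (m : ℕ) (k : Fin (m + 1)) :
    R F c (gfun F m (Sum.inl k)) = c 1 1 • gfun F (m + 1) (Sum.inl k.castSucc) := by
  funext y
  have hk : (m + 1) - (k : ℕ) = (m - (k : ℕ)) + 1 := by omega
  simp only [R_apply, gfun, Sum.elim_inl, Pi.smul_apply, smul_mul_assoc, L3 y c hc,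
    Fin.coe_castSucc, hk, pow_succ, smul_smul]
  ring_nf

lemma R_gfun_inr0 (c : M2 F) (hc : c 1 0 = 0) (m : ℕ) :
    R F c (gfun F m (Sum.inr 0)) = c 0 0 • gfun F (m + 1) (Sum.inr 0)
      + c 0 1 • gfun F (m + 1) (Sum.inl (Fin.last (m + 1))) := by
  funext y
  have hk : (m + 1) - ((Fin.last (m+1) : Fin (m+2)) : ℕ) = 0 := by simp
  simp only [R_apply, gfun, Sum.elim_inr, Sum.elim_inl, Matrix.cons_val_zero, Pi.add_apply,
    Pi.smul_apply, smul_mul_assoc, L1 y c hc, Fin.val_last, hk, pow_zero, mul_one, pow_succ,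
    smul_add, smul_smul]
  ring_nf
  simp [Nat.sub_self]

lemma R_gfun_inr1 (c : M2 F) (hc : c 1 0 = 0) (m : ℕ) :
    R F c (gfun F m (Sum.inr 1)) = c 1 1 • gfun F (m + 1) (Sum.inr 1) := by
  funext y
  simp only [R_apply, gfun, Sum.elim_inr, Matrix.cons_val_one, Matrix.head_cons,
    Matrix.cons_val_zero, Pi.smul_apply, smul_mul_assoc, L2 y c hc, pow_succ, smul_smul]
  ring_nf

lemma ofFn_step (m : ℕ) (y : ↥(Dsub F)) (b : Fin (m + 2) → M2 F) :
    b 0 * (List.ofFn fun i : Fin (m + 1) => (y : M2 F) * b i.succ).prod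
      = (b 0 * (List.ofFn fun i : Fin m => (y : M2 F) * b i.succ.castSucc).prod)
        * ((y : M2 F) * b (Fin.last (m + 1))) := by
  rw [List.ofFn_succ' (fun i : Fin (m + 1) => (y : M2 F) * b i.succ)]
  simp [List.prod_concat, Fin.succ_last, mul_assoc]

lemma ofFn_snoc (m : ℕ) (y : ↥(Dsub F)) (b : Fin (m + 1) → M2 F) (c : M2 F) :
    (Fin.snoc b c : Fin (m + 2) → M2 F) 0
        * (List.ofFn fun i : Fin (m + 1) =>
            (y : M2 F) * (Fin.snoc b c : Fin (m + 2) → M2 F) i.succ).prod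
      = (b 0 * (List.ofFn fun i : Fin m => (y : M2 F) * b i.succ).prod) * ((y : M2 F) * c) := by
  rw [ofFn_step m y (Fin.snoc b c)]
  congr 1
  · congr 1
    refine congrArg List.prod (congrArg List.ofFn ?_)
    funext i
    rw [Fin.snoc_castSucc]
  · rw [Fin.snoc_last]

lemma R_span_gfun (c : M2 F) (hc : c 1 0 = 0) (m : ℕ) {f : ↥(Dsub F) → M2 F}
    (hf : f ∈ Submodule.span F (Set.range (gfun F m))) :
    R F c f ∈ Submodule.span F (Set.range (gfun F (m + 1))) := by
  induction hf using Submodule.span_induction with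
  | mem x hx =>
    obtain ⟨j, rfl⟩ := hx
    rcases j with k | i
    · rw [R_gfun_inl c hc]
      exact Submodule.smul_mem _ _ (Submodule.subset_span ⟨Sum.inl k.castSucc, rfl⟩)
    · fin_cases i
      · show R F c (gfun F m (Sum.inr 0)) ∈ _
        rw [R_gfun_inr0 c hc]
        exact add_mem (Submodule.smul_mem _ _ (Submodule.subset_span ⟨Sum.inr 0, rfl⟩))
          (Submodule.smul_mem _ _ (Submodule.subset_span ⟨Sum.inl (Fin.last (m + 1)), rfl⟩))
      · show R F c (gfun F m (Sum.inr 1)) ∈ _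
        rw [R_gfun_inr1 c hc]
        exact Submodule.smul_mem _ _ (Submodule.subset_span ⟨Sum.inr 1, rfl⟩)
  | zero => rw [map_zero]; exact zero_mem _
  | add x y hx hy ihx ihy => rw [map_add]; exact add_mem ihx ihy
  | smul a x hx ih => rw [map_smul]; exact Submodule.smul_mem _ _ ih

lemma R_span_S (c : M2 F) (hc : c ∈ UTset F) (m : ℕ) {f : ↥(Dsub F) → M2 F}
    (hf : f ∈ Submodule.span F (SetS F m)) :
    R F c f ∈ Submodule.span F (SetS F (m + 1)) := by
  induction hf using Submodule.span_induction with
  | mem x hx =>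
    obtain ⟨b, hb, rfl⟩ := hx
    refine Submodule.subset_span ⟨Fin.snoc b c, ?_, ?_⟩
    · intro i
      refine Fin.lastCases ?_ (fun j => ?_) i
      · rw [Fin.snoc_last]; exact hc
      · rw [Fin.snoc_castSucc]; exact hb j
    · funext y
      rw [R_apply]
      exact (ofFn_snoc m y b c).symm
  | zero => rw [map_zero]; exact zero_mem _
  | add x y hx hy ihx ihy => rw [map_add]; exact add_mem ihx ihy
  | smul a x hx ih => rw [map_smul]; exact Submodule.smul_mem _ _ ih

lemma e11_UT : e11 F ∈ UTset F := by simp [UTset, e11, Matrix.single]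
lemma e12_UT : e12 F ∈ UTset F := by simp [UTset, e12, Matrix.single]
lemma e22_UT : e22 F ∈ UTset F := by simp [UTset, e22, Matrix.single]

lemma span_eq (m : ℕ) :
    Submodule.span F (SetS F m) = Submodule.span F (Set.range (gfun F m)) := by
  induction m with
  | zero =>
    apply le_antisymm
    · rw [Submodule.span_le]
      rintro f ⟨b, hb, rfl⟩
      have hf : (fun y : ↥(Dsub F) =>
            b 0 * (List.ofFn fun i : Fin 0 => ((y : M2 F)) * b i.succ).prod)
          = (b 0 0 0) • gfun F 0 (Sum.inr 0) + (b 0 1 1) • gfun F 0 (Sum.inr 1)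
            + (b 0 0 1) • gfun F 0 (Sum.inl 0) := by
        funext y
        simp only [List.ofFn_zero, List.prod_nil, mul_one, gfun, Sum.elim_inr, Sum.elim_inl,
          Matrix.cons_val_zero, Matrix.cons_val_one, Matrix.head_cons, Pi.add_apply,
          Pi.smul_apply, pow_zero, Fin.val_zero, one_smul, one_mul, Nat.sub_zero]
        have hb0 : b 0 1 0 = 0 := hb 0
        ext a b'
        fin_cases a <;> fin_cases b' <;>
          simp [e11, e12, e22, Matrix.single, hb0]
      rw [hf]
      refine add_mem (add_mem ?_ ?_) ?_ <;>
        exact Submodule.smul_mem _ _ (Submodule.subset_span ⟨_, rfl⟩)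
    · rw [Submodule.span_le]
      rintro f ⟨j, rfl⟩
      rcases j with k | i
      · refine Submodule.subset_span ⟨fun _ => e12 F, fun _ => e12_UT, ?_⟩
        funext y
        have : k = 0 := Fin.ext (by omega)
        simp [gfun, this]
      · fin_cases i
        · refine Submodule.subset_span ⟨fun _ => e11 F, fun _ => e11_UT, ?_⟩
          funext y
          simp [gfun]
        · refine Submodule.subset_span ⟨fun _ => e22 F, fun _ => e22_UT, ?_⟩
          funext y
          simp [gfun]
  | succ m ih =>
    apply le_antisymm
    · rw [Submodule.span_le]
      rintro f ⟨b, hb, rfl⟩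
      have key : (fun y : ↥(Dsub F) =>
            b 0 * (List.ofFn fun i : Fin (m + 1) => ((y : M2 F)) * b i.succ).prod)
          = R F (b (Fin.last (m + 1))) (fun y : ↥(Dsub F) =>
              (fun i : Fin (m + 1) => b i.castSucc) 0 *
                (List.ofFn fun i : Fin m =>
                  ((y : M2 F)) * (fun i : Fin (m + 1) => b i.castSucc) i.succ).prod) := by
        funext y
        rw [R_apply, ofFn_step m y b]
        simp [Fin.castSucc_zero]
      rw [key]
      refine R_span_gfun _ (hb _) m ?_
      rw [← ih]
      exact Submodule.subset_span ⟨fun i => b i.castSucc, fun i => hb _, rfl⟩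
    · rw [Submodule.span_le]
      rintro f ⟨j, rfl⟩
      have hmem : ∀ j', gfun F m j' ∈ Submodule.span F (SetS F m) := by
        intro j'; rw [ih]; exact Submodule.subset_span ⟨j', rfl⟩
      rcases j with k | i
      · refine Fin.lastCases ?_ (fun k' => ?_) k
        · have h : gfun F (m + 1) (Sum.inl (Fin.last (m + 1)))
              = R F (e12 F) (gfun F m (Sum.inr 0)) := by
            rw [R_gfun_inr0 (e12 F) e12_UT m]
            simp [e12, Matrix.single]
          rw [h]
          exact R_span_S _ e12_UT m (hmem _)
        · have h : gfun F (m + 1) (Sum.inl k'.castSucc)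
              = R F (e22 F) (gfun F m (Sum.inl k')) := by
            rw [R_gfun_inl (e22 F) e22_UT m]
            simp [e22, Matrix.single]
          rw [h]
          exact R_span_S _ e22_UT m (hmem _)
      · fin_cases i
        · show gfun F (m + 1) (Sum.inr 0) ∈ _
          have h : gfun F (m + 1) (Sum.inr 0) = R F (e11 F) (gfun F m (Sum.inr 0)) := by
            rw [R_gfun_inr0 (e11 F) e11_UT m]
            simp [e11, Matrix.single]
          rw [h]
          exact R_span_S _ e11_UT m (hmem _)
        · show gfun F (m + 1) (Sum.inr 1) ∈ _
          have h : gfun F (m + 1) (Sum.inr 1) = R F (e22 F) (gfun F m (Sum.inr 1)) := by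
            rw [R_gfun_inr1 (e22 F) e22_UT m]
            simp [e22, Matrix.single]
          rw [h]
          exact R_span_S _ e22_UT m (hmem _)

lemma gfun_li [CharZero F] (m : ℕ) : LinearIndependent F (gfun F m) := by
  rw [Fintype.linearIndependent_iff]
  intro g hg
  have hymem : ∀ t : F, t • e11 F + e22 F ∈ Dsub F := by
    intro t
    exact add_mem (Submodule.smul_mem _ _ (Submodule.subset_span (by simp)))
      (Submodule.subset_span (by simp))
  set yel : F → ↥(Dsub F) := fun t => ⟨t • e11 F + e22 F, hymem t⟩ with hyel
  have hy00 : ∀ t : F, ((yel t : M2 F)) 0 0 = t := by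
    intro t; simp [hyel, e11, e22, Matrix.single]
  have hy11 : ∀ t : F, ((yel t : M2 F)) 1 1 = 1 := by
    intro t; simp [hyel, e11, e22, Matrix.single]
  have h3 : ∀ (t : F) (a b : Fin 2),
      (∑ jj : Fin (m + 1) ⊕ Fin 2, g jj * gfun F m jj (yel t) a b) = 0 := by
    intro t a b
    have := congrFun hg (yel t)
    have h4 : (∑ jj : Fin (m + 1) ⊕ Fin 2, g jj • gfun F m jj) (yel t) a b = 0 := by
      rw [this]; rfl
    rw [Finset.sum_apply] at h4
    simpa [Matrix.sum_apply] using h4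
  -- entry (0,0) at t = 1 : g (inr 0) = 0
  have h00 : g (Sum.inr 0) = 0 := by
    have := h3 1 0 0
    simpa [Fintype.sum_sum_type, Fin.sum_univ_two, gfun, hy00, hy11, e11, e12, e22,
      Matrix.single] using this
  have h11 : g (Sum.inr 1) = 0 := by
    have := h3 1 1 1
    simpa [Fintype.sum_sum_type, Fin.sum_univ_two, gfun, hy00, hy11, e11, e12, e22,
      Matrix.single] using this
  have h01 : ∀ k : Fin (m + 1), g (Sum.inl k) = 0 := by
    have hp : ∀ t : F, (∑ k : Fin (m + 1),
        Polynomial.C (g (Sum.inl k)) * Polynomial.X ^ (k : ℕ)).eval t = 0 := by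
      intro t
      have := h3 t 0 1
      simp only [Fintype.sum_sum_type, Fin.sum_univ_two, gfun, Sum.elim_inl, Sum.elim_inr,
        Matrix.cons_val_zero, Matrix.cons_val_one, Matrix.head_cons, hy00, hy11, one_pow,
        mul_one] at this
      simp only [Polynomial.eval_finset_sum, Polynomial.eval_mul, Polynomial.eval_C,
        Polynomial.eval_pow, Polynomial.eval_X]
      simpa [e11, e12, e22, Matrix.single] using this
    have hp0 : (∑ k : Fin (m + 1),
        Polynomial.C (g (Sum.inl k)) * Polynomial.X ^ (k : ℕ)) = 0 :=
      Polynomial.funext (fun t => by rw [hp t]; simp)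
    intro k
    have := congrArg (fun q => Polynomial.coeff q (k : ℕ)) hp0
    simpa [Polynomial.finset_sum_coeff, Polynomial.coeff_C_mul, Polynomial.coeff_X_pow,
      Fin.val_eq_val, Finset.sum_ite_eq'] using this
  intro j
  rcases j with k | i
  · exact h01 k
  · fin_cases i
    · exact h00
    · exact h11

end S16

theorem stmt16 (F : Type*) [Field F] [CharZero F] (n : ℕ) (hn : 1 ≤ n) :
    Module.finrank F ↥(Submodule.span F
      {f : ↥(Dsub F) → M2 F | ∃ b : Fin (n + 1) → M2 F,
        (∀ i, b i ∈ UTset F) ∧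
        f = fun y : ↥(Dsub F) =>
          b 0 * (List.ofFn fun i : Fin n => ((y : M2 F)) * b i.succ).prod})
      = n + 3 := by
  have h1 : {f : ↥(Dsub F) → M2 F | ∃ b : Fin (n + 1) → M2 F,
        (∀ i, b i ∈ UTset F) ∧
        f = fun y : ↥(Dsub F) =>
          b 0 * (List.ofFn fun i : Fin n => ((y : M2 F)) * b i.succ).prod} = S16.SetS F n := rfl
  rw [h1, S16.span_eq]
  have hcard := finrank_span_eq_card (R := F) (S16.gfun_li (F := F) n)
  rw [hcard]
  simp [Fintype.card_sum]
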